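/- arXiv:1106.3241 — 3 statements merged into one kernel-verified Lean document; each statement's English description precedes it below -/
import Mathlib

section
/- In the Lie algebra H_q, for all m,n ∈ ℤ one has q·⁅β_{m+2}, β_n⁆ − (1+q²)·⁅β_{m+1}, β_{n+1}⁆ + q·⁅β_m, β_{n+2}⁆ = 0. (This is the coefficient form of the locality relation (x₁ − qx₂)(qx₁ − x₂)[β(x₁), β(x₂)] = 0 for the generating function β(x) = Σ_{n∈ℤ} β_n x^{−n}.) -/
noncomputable section

/-- The `q`-integer `[m]_q = (q^m - q^{-m})/(q - q⁻¹)` for `m : ℤ`. -/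
def qint (q : ℂ) (m : ℤ) : ℂ := (q ^ m - q ^ (-m)) / (q - q⁻¹)

/-- The bracket of the `q`-deformed Heisenberg Lie algebra `H_q`, realized on
`(ℤ →₀ ℂ) × ℂ`: `⁅(f,a),(g,b)⁆ = (0, Σ_{m ∈ ℤ} [m]_q · f(m) · g(−m))`, so that
`⁅β_m, β_n⁆ = [m]_q δ_{m+n,0} c` with `β_m = (single m 1, 0)` and `c = (0,1)`. -/
def hqBracket (q : ℂ) (x y : (ℤ →₀ ℂ) × ℂ) : (ℤ →₀ ℂ) × ℂ :=
  (0, x.1.sum fun m fm => qint q m * fm * y.1 (-m))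

/-- The generator `β_m = (single m 1, 0)` of `H_q`. -/
def hqBeta (m : ℤ) : (ℤ →₀ ℂ) × ℂ := ((Finsupp.single m 1 : ℤ →₀ ℂ), (0 : ℂ))

/-- in `H_q`, for all `m, n ∈ ℤ`,
`q·⁅β_{m+2}, β_n⁆ − (1+q²)·⁅β_{m+1}, β_{n+1}⁆ + q·⁅β_m, β_{n+2}⁆ = 0`,
the coefficient form of the locality relation
`(x₁ − qx₂)(qx₁ − x₂)[β(x₁), β(x₂)] = 0`. -/
theorem stmt_1 (q : ℂ) (hq0 : q ≠ 0) (hq1 : q ≠ 1) (hq2 : q ≠ -1) (m n : ℤ) :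
    q • hqBracket q (hqBeta (m + 2)) (hqBeta n)
      - (1 + q ^ 2) • hqBracket q (hqBeta (m + 1)) (hqBeta (n + 1))
      + q • hqBracket q (hqBeta m) (hqBeta (n + 2)) = 0 := by
  classical
  have key : ∀ a b : ℤ, hqBracket q (hqBeta a) (hqBeta b)
      = (0, if b = -a then qint q a else 0) := by
    intro a b
    have hsum : (Finsupp.single a (1:ℂ)).sum
        (fun k fk => qint q k * fk * (Finsupp.single b (1:ℂ)) (-k))
        = qint q a * 1 * (Finsupp.single b (1:ℂ)) (-a) :=
      Finsupp.sum_single_index (by simp)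
    rw [hqBracket]
    refine Prod.ext rfl ?_
    dsimp only [hqBeta]
    rw [hsum, mul_one, Finsupp.single_apply]
    split_ifs <;> simp
  refine Prod.ext ?_ ?_
  · simp [key, Prod.smul_def]
  · simp only [key, Prod.smul_def, Prod.snd_add, Prod.snd_sub, Prod.snd_zero, smul_eq_mul]
    by_cases h : m + n + 2 = 0
    · rw [if_pos (show n = -(m+2) by omega), if_pos (show n+1 = -(m+1) by omega),
        if_pos (show n+2 = -m by omega)]
      simp only [qint, mul_div_assoc']
      rw [div_sub_div_same, ← add_div, div_eq_zero_iff]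
      left
      have e1 : q ^ (m+2) = q ^ m * q ^ 2 := by
        rw [zpow_add₀ hq0]; norm_cast
      have e2 : q ^ (-(m+2)) = (q ^ m)⁻¹ * (q ^ 2)⁻¹ := by
        rw [show -(m+2) = -m + -2 by ring, zpow_add₀ hq0, zpow_neg, zpow_neg]; norm_cast
      have e3 : q ^ (m+1) = q ^ m * q := by
        rw [zpow_add₀ hq0, zpow_one]
      have e4 : q ^ (-(m+1)) = (q ^ m)⁻¹ * q⁻¹ := by
        rw [show -(m+1) = -m + -1 by ring, zpow_add₀ hq0, zpow_neg, zpow_neg, zpow_one]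
      have e5 : q ^ (-m) = (q ^ m)⁻¹ := by rw [zpow_neg]
      rw [e1, e2, e3, e4, e5]
      have hm : q ^ m ≠ 0 := zpow_ne_zero m hq0
      field_simp
      ring
    · rw [if_neg (show ¬ n = -(m+2) by omega), if_neg (show ¬ n+1 = -(m+1) by omega),
        if_neg (show ¬ n+2 = -m by omega)]
      ring
end
end

section
/- Let q ∈ ℂ be nonzero and not a root of unity, and let n ∈ ℤ. The complex function g_n(z) = q^{n+1}e^z/(1 − q^{n+1}e^z)² − q^{n−1}e^z/(1 − q^{n−1}e^z)² is defined and holomorphic on some punctured neighborhood of z = 0, and the function z ↦ g_n(z) − (δ_{n,−1} − δ_{n,1})·z^{−2} has a removable singularity at z = 0: there exists a function holomorphic in a full neighborhood of 0 agreeing with it on a punctured neighborhood of 0. Equivalently, the Laurent expansion f_n(x) of g_n at x = 0 satisfies f_n(x) = δ_{n+1,0}x^{−2} − δ_{n−1,0}x^{−2} + O(1). -/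
noncomputable section

open Complex

/-- The function `g_n(z) = q^{n+1}e^z/(1 − q^{n+1}e^z)² − q^{n−1}e^z/(1 − q^{n−1}e^z)²`. -/
def gFun (q : ℂ) (n : ℤ) (z : ℂ) : ℂ :=
  q ^ (n + 1) * Complex.exp z / (1 - q ^ (n + 1) * Complex.exp z) ^ 2
    - q ^ (n - 1) * Complex.exp z / (1 - q ^ (n - 1) * Complex.exp z) ^ 2

open Filter Topology

lemma analyticAt_dslope_zero {f : ℂ → ℂ} (hf : AnalyticAt ℂ f 0) :
    AnalyticAt ℂ (dslope f 0) 0 := by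
  obtain ⟨p, hp⟩ := hf
  exact ⟨_, hp.has_fpower_series_dslope_fslope⟩

lemma term_analyticAt (a : ℂ) (ha : a ≠ 1) :
    AnalyticAt ℂ (fun z => a * Complex.exp z / (1 - a * Complex.exp z) ^ 2) 0 := by
  refine (analyticAt_const.mul analyticAt_cexp).div
    ((analyticAt_const.sub (analyticAt_const.mul analyticAt_cexp)).pow 2) ?_
  simp only [Complex.exp_zero, mul_one]
  exact pow_ne_zero 2 (sub_ne_zero.mpr fun h => ha h.symm)

/-- The key removable-singularity fact: `e^z/(1-e^z)^2 - 1/z^2` extends analytically to `0`. -/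
lemma key_H : ∃ H : ℂ → ℂ, AnalyticAt ℂ H 0 ∧
    ∀ z : ℂ, z ≠ 0 → Complex.exp z ≠ 1 →
      H z = Complex.exp z / (1 - Complex.exp z) ^ 2 - 1 / z ^ 2 := by
  set S : ℂ → ℂ := dslope Complex.sinh 0 with hSdef
  have hsinh_an : AnalyticAt ℂ Complex.sinh 0 := by
    have h : Complex.sinh = fun z : ℂ => (Complex.exp z - Complex.exp (-z)) / 2 := rfl
    rw [h]
    exact (analyticAt_cexp.sub (analyticAt_id.neg.cexp)).div analyticAt_const (by norm_num)
  have hSan : AnalyticAt ℂ S 0 := analyticAt_dslope_zero hsinh_an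
  have hS0 : S 0 = 1 := by
    rw [hSdef, dslope_same, Complex.deriv_sinh, Complex.cosh_zero]
  have hSz : ∀ z : ℂ, z ≠ 0 → S z = Complex.sinh z / z := by
    intro z hz
    rw [hSdef, dslope_of_ne _ hz, slope_def_field]
    simp
  have hSeven : (fun z => S (-z)) = S := by
    funext z
    rcases eq_or_ne z 0 with rfl | hz
    · simp
    · rw [hSz _ (neg_ne_zero.mpr hz), hSz _ hz, Complex.sinh_neg, neg_div_neg_eq]
  have hS'0 : deriv S 0 = 0 := by
    have hd : HasDerivAt S (deriv S 0) 0 := hSan.differentiableAt.hasDerivAt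
    have hneg : HasDerivAt (fun z : ℂ => -z) (-1) 0 := (hasDerivAt_id (0:ℂ)).neg
    have hd' : HasDerivAt S (deriv S 0) (-0 : ℂ) := by rw [neg_zero]; exact hd
    have h2 : HasDerivAt (fun z => S (-z)) (deriv S 0 * (-1)) 0 :=
      HasDerivAt.comp 0 hd' hneg
    rw [hSeven] at h2
    have := hd.unique h2
    linear_combination this / 2
  set G : ℂ → ℂ := fun z => S (z / 2) with hGdef
  have hGan : AnalyticAt ℂ G 0 := by
    have h2 : AnalyticAt ℂ (fun z : ℂ => z / 2) 0 :=
      analyticAt_id.div analyticAt_const two_ne_zero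
    have hSan' : AnalyticAt ℂ S ((0:ℂ) / 2) := by
      rw [zero_div]; exact hSan
    exact AnalyticAt.comp (g := S) (f := fun z : ℂ => z / 2) hSan' h2
  have hG0 : G 0 = 1 := by simp [hGdef, hS0]
  have hGd : HasDerivAt G 0 0 := by
    have hhalf : HasDerivAt (fun z : ℂ => z / 2) (2⁻¹) 0 := by
      simpa [div_eq_mul_inv] using (hasDerivAt_id (0:ℂ)).mul_const (2⁻¹ : ℂ)
    have hSd : HasDerivAt S 0 ((0:ℂ) / 2) := by
      simpa [hS'0] using hSan.differentiableAt.hasDerivAt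
    have := HasDerivAt.comp 0 hSd hhalf
    rw [zero_mul] at this; exact this
  set M : ℂ → ℂ := fun z => 1 - G z ^ 2 with hMdef
  have hMan : AnalyticAt ℂ M 0 := analyticAt_const.sub (hGan.pow 2)
  have hM0 : M 0 = 0 := by simp [hMdef, hG0]
  have hMd : HasDerivAt M 0 0 := by
    have := (hGd.pow 2).const_sub 1
    simpa using this
  set M₁ : ℂ → ℂ := dslope M 0 with hM₁def
  set M₂ : ℂ → ℂ := dslope M₁ 0 with hM₂def
  have hM₁an : AnalyticAt ℂ M₁ 0 := analyticAt_dslope_zero hMan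
  have hM₂an : AnalyticAt ℂ M₂ 0 := analyticAt_dslope_zero hM₁an
  have hM₁0 : M₁ 0 = 0 := by rw [hM₁def, dslope_same]; exact hMd.deriv
  have hM₂z : ∀ z : ℂ, z ≠ 0 → M₂ z = M z / z ^ 2 := by
    intro z hz
    have h1 : M₁ z = M z / z := by
      rw [hM₁def, dslope_of_ne _ hz, slope_def_field, hM0, sub_zero, sub_zero]
    rw [hM₂def, dslope_of_ne _ hz, slope_def_field, hM₁0, h1, sub_zero, sub_zero,
      div_div, sq]
  refine ⟨fun z => M₂ z / G z ^ 2, hM₂an.div (hGan.pow 2) (by simp [hG0]), ?_⟩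
  intro z hz hexp
  have hz2 : (z / 2 : ℂ) ≠ 0 := div_ne_zero hz two_ne_zero
  set w : ℂ := Complex.exp (z / 2) with hwdef
  have hw : w ≠ 0 := Complex.exp_ne_zero _
  have hw2 : w ^ 2 = Complex.exp z := by
    rw [hwdef, sq, ← Complex.exp_add]
    norm_num
  have hwinv : Complex.exp (-(z / 2)) = w⁻¹ := by
    rw [hwdef, ← Complex.exp_neg]
  have hsinh : Complex.sinh (z / 2) = (w - w⁻¹) / 2 := by
    have h : Complex.sinh (z / 2)
        = (Complex.exp (z / 2) - Complex.exp (-(z / 2))) / 2 := rfl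
    rw [h, hwinv]
  have h1w : (1 : ℂ) - w ^ 2 ≠ 0 := by
    rw [hw2]
    exact sub_ne_zero.mpr fun h => hexp h.symm
  have hww : w - w⁻¹ ≠ 0 := by
    intro h
    apply h1w
    have hwe : w = w⁻¹ := by linear_combination h
    have : w ^ 2 = 1 := by
      rw [sq]
      nth_rewrite 2 [hwe]
      exact mul_inv_cancel₀ hw
    rw [this]; ring
  have hGz : G z = (w - w⁻¹) / z := by
    rw [hGdef]
    simp only
    rw [hSz _ hz2, hsinh]
    field_simp
  show M₂ z / G z ^ 2 = _
  have hMz : M z = 1 - G z ^ 2 := rfl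
  rw [hM₂z z hz, hMz, hGz, ← hw2]
  have hd : (w - w⁻¹) = (w ^ 2 - 1) / w := by field_simp
  have hww' : w ^ 2 - 1 ≠ 0 := fun h => h1w (by linear_combination -h)
  rw [hd]
  field_simp
  ring

/-- STATEMENT 6: for `q` nonzero and not a root of unity and `n ∈ ℤ`, the function `g_n` is
defined and holomorphic on a punctured neighborhood of `z = 0`, and
`z ↦ g_n(z) − (δ_{n,−1} − δ_{n,1})·z^{−2}` has a removable singularity at `0`: there is a
function holomorphic in a full neighborhood of `0` agreeing with it on a punctured
neighborhood of `0`.  Equivalently, `f_n(x) = δ_{n+1,0}x^{−2} − δ_{n−1,0}x^{−2} + O(1)`. -/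
theorem stmt_6 (q : ℂ) (hq0 : q ≠ 0) (hq : ∀ k : ℤ, k ≠ 0 → q ^ k ≠ 1) (n : ℤ) :
    ∃ ε > (0 : ℝ),
      (∀ z ∈ Metric.ball (0 : ℂ) ε \ {0},
        (1 - q ^ (n + 1) * Complex.exp z ≠ 0 ∧ 1 - q ^ (n - 1) * Complex.exp z ≠ 0) ∧
        DifferentiableAt ℂ (gFun q n) z) ∧
      ∃ F : ℂ → ℂ, AnalyticAt ℂ F 0 ∧
        ∀ z ∈ Metric.ball (0 : ℂ) ε \ {0},
          F z = gFun q n z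
            - ((if n = -1 then 1 else 0) - (if n = 1 then 1 else 0)) / z ^ 2 := by
  have hden : ∀ m : ℤ, ∀ᶠ z in 𝓝[≠] (0:ℂ), 1 - q ^ m * Complex.exp z ≠ 0 := by
    intro m
    rcases eq_or_ne (q ^ m) 1 with h1 | h1
    · have hball : Metric.ball (0:ℂ) 1 ∈ 𝓝[≠] (0:ℂ) :=
        nhdsWithin_le_nhds (Metric.ball_mem_nhds 0 one_pos)
      filter_upwards [self_mem_nhdsWithin, hball] with z hz0 hzb
      have hz : z ≠ 0 := fun h => hz0 (by simp [h])
      rw [h1, one_mul, sub_ne_zero]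
      intro h
      obtain ⟨k, hk⟩ := Complex.exp_eq_one_iff.mp h.symm
      have hkne : k ≠ 0 := by
        rintro rfl
        simp at hk
        exact hz hk
      have hzb' : ‖z‖ < 1 := by
        rw [Metric.mem_ball, dist_zero_right] at hzb
        exact hzb
      rw [hk] at hzb'
      have habs : ‖(k:ℂ) * (2 * (Real.pi:ℂ) * Complex.I)‖
          = |(k:ℝ)| * (2 * Real.pi) := by
        simp [abs_of_pos Real.pi_pos]
      rw [habs] at hzb'
      have hk1 : (1:ℝ) ≤ |(k:ℝ)| := by
        rw [← Int.cast_abs]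
        exact_mod_cast Int.one_le_abs hkne
      nlinarith [Real.pi_gt_three]
    · have hc : ContinuousAt (fun z : ℂ => 1 - q ^ m * Complex.exp z) 0 := by
        fun_prop
      have hne : (1:ℂ) - q ^ m * Complex.exp 0 ≠ 0 := by
        rw [Complex.exp_zero, mul_one]
        exact sub_ne_zero.mpr fun h => h1 h.symm
      exact nhdsWithin_le_nhds (hc.eventually_ne hne)
  have hmain : ∃ F : ℂ → ℂ, AnalyticAt ℂ F 0 ∧ ∀ᶠ z in 𝓝[≠] (0:ℂ),
      (1 - q ^ (n + 1) * Complex.exp z ≠ 0 ∧ 1 - q ^ (n - 1) * Complex.exp z ≠ 0) ∧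
      ((fun z : ℂ => F z) z = gFun q n z
        - ((if n = -1 then 1 else 0) - (if n = 1 then 1 else 0)) / z ^ 2) := by
    obtain ⟨H, hHan, hH⟩ := key_H
    rcases eq_or_ne n (-1) with rfl | hn1
    · have hne : q ^ ((-1:ℤ) - 1) ≠ 1 := hq _ (by norm_num)
      refine ⟨fun z => H z - q ^ ((-1:ℤ) - 1) * Complex.exp z
          / (1 - q ^ ((-1:ℤ) - 1) * Complex.exp z) ^ 2,
        hHan.sub (term_analyticAt _ hne), ?_⟩
      filter_upwards [hden (-1 + 1), hden (-1 - 1), self_mem_nhdsWithin] with z h1 h2 hz0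
      have hz : z ≠ 0 := fun h => hz0 (by simp [h])
      have hexp : Complex.exp z ≠ 1 := by
        have h1' : (1:ℂ) - Complex.exp z ≠ 0 := by
          simpa using h1
        exact fun h => h1' (by rw [h]; ring)
      refine ⟨⟨h1, h2⟩, ?_⟩
      simp only
      rw [hH z hz hexp]
      simp only [gFun, show ((-1:ℤ) + 1) = 0 by norm_num, zpow_zero, one_mul]
      norm_num
      ring
    rcases eq_or_ne n 1 with rfl | hn2
    · have hne : q ^ ((1:ℤ) + 1) ≠ 1 := hq _ (by norm_num)
      refine ⟨fun z => q ^ ((1:ℤ) + 1) * Complex.exp z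
          / (1 - q ^ ((1:ℤ) + 1) * Complex.exp z) ^ 2 - H z,
        (term_analyticAt _ hne).sub hHan, ?_⟩
      filter_upwards [hden (1 + 1), hden (1 - 1), self_mem_nhdsWithin] with z h1 h2 hz0
      have hz : z ≠ 0 := fun h => hz0 (by simp [h])
      have hexp : Complex.exp z ≠ 1 := by
        have h2' : (1:ℂ) - Complex.exp z ≠ 0 := by
          simpa using h2
        exact fun h => h2' (by rw [h]; ring)
      refine ⟨⟨h1, h2⟩, ?_⟩
      simp only
      rw [hH z hz hexp]
      simp only [gFun, show ((1:ℤ) - 1) = 0 by norm_num, zpow_zero, one_mul]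
      norm_num
      ring
    · have hne1 : q ^ (n + 1) ≠ 1 := hq _ (by omega)
      have hne2 : q ^ (n - 1) ≠ 1 := hq _ (by omega)
      refine ⟨gFun q n, ?_, ?_⟩
      · exact (term_analyticAt _ hne1).sub (term_analyticAt _ hne2)
      · filter_upwards [hden (n + 1), hden (n - 1)] with z h1 h2
        refine ⟨⟨h1, h2⟩, ?_⟩
        simp [if_neg hn1, if_neg hn2]
  obtain ⟨F, hFan, hev⟩ := hmain
  obtain ⟨ε, hε, hsub⟩ := Metric.mem_nhdsWithin_iff.mp hev
  refine ⟨ε, hε, ?_, F, hFan, ?_⟩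
  · intro z hzmem
    have hz' : z ∈ Metric.ball (0:ℂ) ε ∩ {0}ᶜ := ⟨hzmem.1, hzmem.2⟩
    obtain ⟨⟨h1, h2⟩, _⟩ := hsub hz'
    refine ⟨⟨h1, h2⟩, ?_⟩
    have hde : DifferentiableAt ℂ Complex.exp z := Complex.differentiable_exp.differentiableAt
    exact DifferentiableAt.sub
      (((differentiableAt_const _).mul hde).div
        (((differentiableAt_const _).sub ((differentiableAt_const _).mul hde)).pow 2)
        (pow_ne_zero 2 h1))
      (((differentiableAt_const _).mul hde).div
        (((differentiableAt_const _).sub ((differentiableAt_const _).mul hde)).pow 2)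
        (pow_ne_zero 2 h2))
  · intro z hzmem
    have hz' : z ∈ Metric.ball (0:ℂ) ε ∩ {0}ᶜ := ⟨hzmem.1, hzmem.2⟩
    exact (hsub hz').2
end
end

section
/- Assume ℓ ∈ ℂ with ℓ ≠ 0. Then the polynomial module V is irreducible under the operators E(r,m): if A ⊆ V is a ℂ-linear subspace satisfying E(r,m)(A) ⊆ A for all r,m ∈ ℤ, then A = 0 or A = V. -/
noncomputable section

/-- The operator `E(r,m)` on `V = ℂ[x_n^{(r)} : r ∈ ℤ, n ≥ 1]` (variables indexed by
`ℤ × ℕ+`): `E(r,0) = 0`; `E(r,−n)` is multiplication by `x_n^{(r)}` for `n ≥ 1`; and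
`E(r,n) = ℓ·n·(∂/∂x_n^{(r)} − ∂/∂x_n^{(r−1)})` for `n ≥ 1`. -/
def Eop (l : ℂ) (r m : ℤ) :
    MvPolynomial (ℤ × ℕ+) ℂ →ₗ[ℂ] MvPolynomial (ℤ × ℕ+) ℂ :=
  if h : 0 < m then
    (l * (m : ℂ)) •
      ((MvPolynomial.pderiv ((r, ⟨m.toNat, by omega⟩) : ℤ × ℕ+)).toLinearMap
        - (MvPolynomial.pderiv ((r - 1, ⟨m.toNat, by omega⟩) : ℤ × ℕ+)).toLinearMap)
  else if h' : m < 0 then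
    LinearMap.mulLeft ℂ (MvPolynomial.X ((r, ⟨(-m).toNat, by omega⟩) : ℤ × ℕ+))
  else 0

open MvPolynomial

private lemma pnat_mk_toNat (n : ℕ+) (h : 0 < ((n : ℤ)).toNat) :
    (⟨((n : ℤ)).toNat, h⟩ : ℕ+) = n := by
  ext
  simp
  rfl

private lemma Eop_pos (l : ℂ) (r : ℤ) (n : ℕ+) (p : MvPolynomial (ℤ × ℕ+) ℂ) :
    Eop l r (n : ℤ) p = (l * (n : ℂ)) • (pderiv (r, n) p - pderiv (r - 1, n) p) := by
  have h : (0 : ℤ) < (n : ℤ) := by exact_mod_cast n.pos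
  rw [Eop, dif_pos h]
  simp only [pnat_mk_toNat, LinearMap.smul_apply, LinearMap.sub_apply,
    Derivation.coeFn_coe]
  push_cast
  rfl

private lemma Eop_neg (l : ℂ) (r : ℤ) (n : ℕ+) (p : MvPolynomial (ℤ × ℕ+) ℂ) :
    Eop l r (-(n : ℤ)) p = X (r, n) * p := by
  have h : (0 : ℤ) < (n : ℤ) := by exact_mod_cast n.pos
  rw [Eop, dif_neg (by omega), dif_pos (by omega)]
  have : (-(-(n:ℤ))) = (n:ℤ) := by omega
  simp only [LinearMap.mulLeft_apply, this, pnat_mk_toNat]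

private lemma coeff_pderiv' (v : ℤ × ℕ+) (m : (ℤ × ℕ+) →₀ ℕ)
    (p : MvPolynomial (ℤ × ℕ+) ℂ) :
    coeff m (pderiv v p) = ((m v : ℂ) + 1) * coeff (m + Finsupp.single v 1) p := by
  classical
  induction p using MvPolynomial.induction_on' with
  | monomial d a =>
    rw [pderiv_monomial, coeff_monomial, coeff_monomial]
    by_cases hd : d = m + Finsupp.single v 1
    · subst hd
      have h1 : (m + Finsupp.single v 1) - Finsupp.single v 1 = m := by
        ext w
        simp only [Finsupp.tsub_apply, Finsupp.add_apply]
        omega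
      rw [if_pos h1, if_pos rfl]
      simp only [Finsupp.add_apply, Finsupp.single_eq_same]
      push_cast
      ring
    · rw [if_neg hd, mul_zero]
      rcases Nat.eq_zero_or_pos (d v) with hv | hv
      · simp [hv]
      · rw [if_neg]
        intro heq
        exact hd (by rw [← heq, tsub_add_cancel_of_le (Finsupp.single_le_iff.mpr hv)])
  | add p q hp hq =>
    simp [coeff_add, hp, hq, mul_add]

private lemma totalDegree_pderiv_lt (v : ℤ × ℕ+) (p : MvPolynomial (ℤ × ℕ+) ℂ)
    (hp : 0 < p.totalDegree) : (pderiv v p).totalDegree < p.totalDegree := by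
  rw [totalDegree, Finset.sup_lt_iff (show ⊥ < p.totalDegree from hp)]
  intro m hm
  rw [mem_support_iff] at hm
  have hco := coeff_pderiv' v m p
  have h2 : coeff (m + Finsupp.single v 1) p ≠ 0 := by
    intro h0
    exact hm (by rw [hco, h0, mul_zero])
  have h3 := le_totalDegree (mem_support_iff.mpr h2)
  have h4 : (m + Finsupp.single v 1).sum (fun _ n => n)
      = m.sum (fun _ n => n) + 1 := by
    rw [Finsupp.sum_add_index' (fun _ => rfl) (fun _ _ _ => rfl),
      Finsupp.sum_single_index rfl]
  omega

private lemma pderiv_mem (l : ℂ) (hl : l ≠ 0)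
    (A : Submodule ℂ (MvPolynomial (ℤ × ℕ+) ℂ))
    (hA : ∀ r m : ℤ, ∀ p ∈ A, Eop l r m p ∈ A)
    (r : ℤ) (n : ℕ+) (p : MvPolynomial (ℤ × ℕ+) ℂ) (hp : p ∈ A) :
    pderiv (r, n) p ∈ A := by
  classical
  set s : Finset ℤ := insert r (p.vars.image Prod.fst) with hs
  have hrs : r ∈ s := Finset.mem_insert_self _ _
  set r₀ := s.min' ⟨r, hrs⟩ with hr₀def
  have hr₀ : r₀ ≤ r := Finset.min'_le _ _ hrs
  have hnot : ((r₀ - 1, n) : ℤ × ℕ+) ∉ p.vars := by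
    intro h
    have h1 : r₀ - 1 ∈ s :=
      Finset.mem_insert_of_mem (Finset.mem_image_of_mem _ h)
    have := Finset.min'_le s _ h1
    omega
  have hzero : pderiv ((r₀ - 1, n) : ℤ × ℕ+) p = 0 :=
    pderiv_eq_zero_of_notMem_vars hnot
  have tele : ∀ r' : ℤ, r₀ ≤ r' →
      ∑ j ∈ Finset.Icc r₀ r', ((l * (n : ℂ)) • pderiv ((j, n) : ℤ × ℕ+) p
        - (l * (n : ℂ)) • pderiv ((j - 1, n) : ℤ × ℕ+) p)
      = (l * (n : ℂ)) • pderiv ((r', n) : ℤ × ℕ+) p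
        - (l * (n : ℂ)) • pderiv ((r₀ - 1, n) : ℤ × ℕ+) p := by
    refine Int.le_induction ?_ ?_
    · rw [Finset.Icc_self, Finset.sum_singleton]
    · intro r' h ih
      have hIcc : Finset.Icc r₀ (r' + 1) = insert (r' + 1) (Finset.Icc r₀ r') := by
        ext j
        simp only [Finset.mem_Icc, Finset.mem_insert]
        omega
      rw [hIcc, Finset.sum_insert (by simp only [Finset.mem_Icc]; omega), ih]
      have he : r' + 1 - 1 = r' := by ring
      rw [he]
      abel
  have hsum : (∑ j ∈ Finset.Icc r₀ r, Eop l j (n : ℤ) p) ∈ A :=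
    Submodule.sum_mem _ fun j _ => hA j (n : ℤ) p hp
  rw [Finset.sum_congr rfl (fun j _ => by rw [Eop_pos, smul_sub]), tele r hr₀,
    hzero, smul_zero, sub_zero] at hsum
  have hn : ((n : ℕ) : ℂ) ≠ 0 := by
    exact_mod_cast n.ne_zero
  have hln : (l * (n : ℂ)) ≠ 0 := mul_ne_zero hl hn
  have h2 := A.smul_mem (l * (n : ℂ))⁻¹ hsum
  rwa [smul_smul, inv_mul_cancel₀ hln, one_smul] at h2

private lemma eq_C_of_totalDegree_eq_zero (p : MvPolynomial (ℤ × ℕ+) ℂ)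
    (h : p.totalDegree = 0) : p = C (coeff 0 p) := by
  ext m
  rcases eq_or_ne m 0 with rfl | hm
  · simp
  · rw [coeff_C, if_neg (Ne.symm hm)]
    by_contra hc
    have h2 := (totalDegree_eq_zero_iff _ p).mp h m (mem_support_iff.mpr hc)
    exact hm (Finsupp.ext fun x => h2 x)

private lemma exists_const_mem (A : Submodule ℂ (MvPolynomial (ℤ × ℕ+) ℂ))
    (hder : ∀ (v : ℤ × ℕ+) (p : MvPolynomial (ℤ × ℕ+) ℂ), p ∈ A → pderiv v p ∈ A) :
    ∀ (N : ℕ) (p : MvPolynomial (ℤ × ℕ+) ℂ), p.totalDegree ≤ N → p ∈ A → p ≠ 0 →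
      ∃ c : ℂ, c ≠ 0 ∧ C c ∈ A := by
  intro N
  induction N with
  | zero =>
    intro p hdeg hp hne
    have h0 : p.totalDegree = 0 := Nat.le_zero.mp hdeg
    have hc := eq_C_of_totalDegree_eq_zero p h0
    refine ⟨coeff 0 p, ?_, hc ▸ hp⟩
    intro h
    exact hne (by rw [hc, h, map_zero])
  | succ N ih =>
    intro p hdeg hp hne
    by_cases h0 : p.totalDegree = 0
    · have hc := eq_C_of_totalDegree_eq_zero p h0
      refine ⟨coeff 0 p, ?_, hc ▸ hp⟩
      intro h
      exact hne (by rw [hc, h, map_zero])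
    · have hpos : 0 < p.totalDegree := Nat.pos_of_ne_zero h0
      obtain ⟨d, hd, hdv⟩ : ∃ d ∈ p.support, p.totalDegree = d.sum fun _ n => n := by
        rw [totalDegree]
        exact Finset.exists_mem_eq_sup _ (support_nonempty.mpr hne) _
      have hdne : d ≠ 0 := by
        intro h
        rw [h] at hdv
        simp [Finsupp.sum_zero_index] at hdv
        omega
      obtain ⟨v, hv0⟩ := Finsupp.ne_iff.mp hdne
      have hv : 0 < d v := by
        have : d v ≠ 0 := by simpa using hv0
        omega
      have hq : pderiv v p ∈ A := hder v p hp
      have hqne : pderiv v p ≠ 0 := by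
        intro h
        have hco := coeff_pderiv' v (d - Finsupp.single v 1) p
        have hle : Finsupp.single v 1 ≤ d := Finsupp.single_le_iff.mpr hv
        rw [tsub_add_cancel_of_le hle, h, coeff_zero] at hco
        have hm : ((d - Finsupp.single v 1 : (ℤ × ℕ+) →₀ ℕ)) v = d v - 1 := by
          rw [Finsupp.tsub_apply, Finsupp.single_eq_same]
        rw [hm] at hco
        have hcast : ((d v - 1 : ℕ) : ℂ) + 1 = (d v : ℂ) := by
          rw [Nat.cast_sub hv]
          ring
        rw [hcast] at hco
        have hcd : coeff d p ≠ 0 := mem_support_iff.mp hd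
        have : (d v : ℂ) ≠ 0 := by
          exact_mod_cast hv.ne'
        exact hcd (by
          rcases mul_eq_zero.mp hco.symm with h' | h'
          · exact absurd h' this
          · exact h')
      have hlt := totalDegree_pderiv_lt v p hpos
      exact ih (pderiv v p) (by omega) hq hqne

/-- STATEMENT 10: for `ℓ ≠ 0`, the polynomial module `V` is irreducible under the operators
`E(r,m)`: every subspace invariant under all `E(r,m)` is `0` or `V`. -/
theorem stmt_10 (l : ℂ) (hl : l ≠ 0)
    (A : Submodule ℂ (MvPolynomial (ℤ × ℕ+) ℂ))
    (hA : ∀ r m : ℤ, ∀ p ∈ A, Eop l r m p ∈ A) :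
    A = ⊥ ∨ A = ⊤ := by
  classical
  by_cases hbot : A = ⊥
  · exact Or.inl hbot
  right
  obtain ⟨p, hp, hpne⟩ := Submodule.ne_bot_iff A |>.mp hbot
  have hder : ∀ (v : ℤ × ℕ+) (q : MvPolynomial (ℤ × ℕ+) ℂ), q ∈ A → pderiv v q ∈ A :=
    fun v q hq => pderiv_mem l hl A hA v.1 v.2 q hq
  obtain ⟨c, hc, hCc⟩ := exists_const_mem A hder p.totalDegree p le_rfl hp hpne
  have hone : (1 : MvPolynomial (ℤ × ℕ+) ℂ) ∈ A := by
    have h2 := A.smul_mem c⁻¹ hCc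
    rwa [smul_eq_C_mul, ← C_mul, inv_mul_cancel₀ hc, C_1] at h2
  rw [Submodule.eq_top_iff']
  intro q
  induction q using MvPolynomial.induction_on with
  | C a =>
    have : C a = a • (1 : MvPolynomial (ℤ × ℕ+) ℂ) := by
      rw [smul_eq_C_mul, mul_one]
    exact this ▸ A.smul_mem a hone
  | add q1 q2 h1 h2 => exact A.add_mem h1 h2
  | mul_X q v hq =>
    have h2 := hA v.1 (-(v.2 : ℤ)) q hq
    rw [Eop_neg] at h2
    rwa [mul_comm]
end
end
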